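/- Suppose positive integers n, l, k, m with l ≥ 3, m ≥ 2 satisfy F_n = F_l^k * (F_l^m - 1), and let Γ = n log(φ) - (k+m) log(F_l) - log(√5). Then Γ < 0 and 0 < -Γ < 2.06 / F_l^m ≤ 1.03 / 2^(m-1). -/

import Mathlib

open Real

set_option maxHeartbeats 1000000 in

theorem gamma_bounds (n l k m : ℕ)
    (hn : 1 ≤ n) (hl : 3 ≤ l) (hk : 1 ≤ k) (hm : 2 ≤ m)
    (heq : Nat.fib n = Nat.fib l ^ k * (Nat.fib l ^ m - 1)) :
    (n : ℝ) * Real.log goldenRatio - ((k : ℝ) + m) * Real.log (Nat.fib l) -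
        Real.log (Real.sqrt 5) < 0 ∧
      0 < -((n : ℝ) * Real.log goldenRatio - ((k : ℝ) + m) * Real.log (Nat.fib l) -
        Real.log (Real.sqrt 5)) ∧
      -((n : ℝ) * Real.log goldenRatio - ((k : ℝ) + m) * Real.log (Nat.fib l) -
        Real.log (Real.sqrt 5)) < 2.06 / (Nat.fib l : ℝ) ^ m ∧
      2.06 / (Nat.fib l : ℝ) ^ m ≤ 1.03 / 2 ^ (m - 1) := by
  have hfl2 : 2 ≤ Nat.fib l := by
    calc 2 = Nat.fib 3 := rfl
    _ ≤ Nat.fib l := Nat.fib_mono hl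
  have hflR : (2:ℝ) ≤ (Nat.fib l : ℝ) := by exact_mod_cast hfl2
  set q : ℝ := (Nat.fib l : ℝ) ^ k with hq
  set P : ℝ := (Nat.fib l : ℝ) ^ m with hP
  have hq2 : 2 ≤ q := by
    have : (Nat.fib l : ℝ) ≤ q := le_self_pow₀ (by linarith) (by omega)
    linarith
  have h2mP : (2:ℝ) ^ m ≤ P := pow_le_pow_left₀ (by norm_num) hflR m
  have hP4 : 4 ≤ P := by
    calc (4:ℝ) = 2 ^ 2 := by norm_num
    _ ≤ 2 ^ m := pow_le_pow_right₀ (by norm_num) hm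
    _ ≤ P := h2mP
  have hPpos : (0:ℝ) < P := by linarith
  have hs5 : (2.23:ℝ) < Real.sqrt 5 := by
    nlinarith [Real.sq_sqrt (by norm_num : (5:ℝ) ≥ 0), Real.sqrt_nonneg 5]
  have hs5' : Real.sqrt 5 < 2.24 := by
    nlinarith [Real.sq_sqrt (by norm_num : (5:ℝ) ≥ 0), Real.sqrt_nonneg 5]
  have h5ne : Real.sqrt 5 ≠ 0 := by linarith
  have hFn : (Nat.fib n : ℝ) = q * P - q := by
    have h1 : (1:ℕ) ≤ Nat.fib l ^ m := Nat.one_le_pow _ _ (by omega)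
    rw [heq]
    push_cast [h1]
    ring
  have hpsi : |goldenConj ^ n| ≤ 1 := by
    rw [abs_pow]
    apply pow_le_one₀ (abs_nonneg _)
    rw [abs_le]
    constructor <;> nlinarith [neg_one_lt_goldenConj, goldenConj_neg]
  have hbinet := Real.coe_fib_eq n
  set A : ℝ := goldenRatio ^ n / Real.sqrt 5 with hA
  have hphin : goldenRatio ^ n = (Nat.fib n : ℝ) * Real.sqrt 5 + goldenConj ^ n := by
    have h : ((Nat.fib n : ℝ)) * Real.sqrt 5 = goldenRatio ^ n - goldenConj ^ n := by
      rw [hbinet, div_mul_cancel₀ _ h5ne]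
    linarith
  have hAe : A = q * P - q + goldenConj ^ n / Real.sqrt 5 := by
    rw [hA, hphin, hFn, add_div, mul_div_cancel_right₀ _ h5ne]
  have he : |goldenConj ^ n / Real.sqrt 5| ≤ 0.45 := by
    rw [abs_div, abs_of_pos (by linarith : (0:ℝ) < Real.sqrt 5)]
    rw [div_le_iff₀ (by linarith)]
    nlinarith
  have heb := abs_le.mp he
  have hApos : 0 < A := by nlinarith
  have hAltB : A < q * P := by nlinarith
  have hgold := one_lt_goldenRatio
  have hlogA : Real.log A = (n : ℝ) * Real.log goldenRatio - Real.log (Real.sqrt 5) := by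
    rw [hA, Real.log_div (by positivity) h5ne, Real.log_pow]
  have hlogB : Real.log (q * P) = ((k : ℝ) + m) * Real.log (Nat.fib l) := by
    rw [hq, hP, ← pow_add, Real.log_pow]
    push_cast
    ring
  have hkey : (n : ℝ) * Real.log goldenRatio - ((k : ℝ) + m) * Real.log (Nat.fib l) -
      Real.log (Real.sqrt 5) = Real.log A - Real.log (q * P) := by
    rw [hlogA, hlogB]; ring
  rw [hkey]
  have hlt : Real.log A < Real.log (q * P) := Real.log_lt_log hApos hAltB
  refine ⟨by linarith, by linarith, ?_, ?_⟩
  · have h1 : -(Real.log A - Real.log (q * P)) = Real.log (q * P / A) := by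
      rw [Real.log_div (by positivity) (ne_of_gt hApos)]; ring
    rw [h1]
    have hkey2 : (q * P - A) * P < 2.06 * A := by
      nlinarith [heb.1, heb.2, mul_le_mul_of_nonneg_right heb.1 (le_of_lt hPpos),
        mul_nonneg (by linarith : (0:ℝ) ≤ q - 2) (by linarith : (0:ℝ) ≤ P - 4)]
    have h3 : q * P - A < 2.06 * A / P := by
      rw [lt_div_iff₀ hPpos]; linarith
    have h4 : q * P < (1 + 2.06 / P) * A := by
      have hrw : (1 + 2.06 / P) * A = A + 2.06 * A / P := by field_simp
      rw [hrw]; linarith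
    have h5 : q * P / A < 1 + 2.06 / P := by
      rw [div_lt_iff₀ hApos]; linarith
    have hlog_le := Real.log_le_sub_one_of_pos (show (0:ℝ) < q * P / A by positivity)
    linarith
  · rw [div_le_div_iff₀ hPpos (by positivity)]
    have hm1 : m - 1 + 1 = m := by omega
    have h2m : (2:ℝ) ^ m = 2 ^ (m - 1) * 2 := by rw [← pow_succ, hm1]
    nlinarith [h2mP, h2m]
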